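/- For every Łukasiewicz path L of length n there exists a Motzkin path M of length n such that the consecutive pattern DU (a down step (1,−1) immediately followed by an up step (1,1)) occurs at exactly the same set of positions in L and in M. -/

import Mathlib

/-- A Łukasiewicz path: vertical step components, each `≥ -1`, all partial sums
nonnegative, total sum `0`. -/
def IsLukas (w : List ℤ) : Prop :=
  (∀ s ∈ w, -1 ≤ s) ∧ (∀ k, 0 ≤ (w.take k).sum) ∧ w.sum = 0

/-- A Motzkin path: a Łukasiewicz path using only steps `(1,1)`, `(1,0)`, `(1,-1)`. -/
def IsMotzkin (w : List ℤ) : Prop :=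
  IsLukas w ∧ ∀ s ∈ w, s ≤ 1

/-- `DU` occurs in `L` at position `j`. -/
def DU (L : List ℤ) (j : ℕ) : Prop :=
  L[j]? = some (-1) ∧ L[j + 1]? = some 1

open Classical in
/-- Height function of the replacement Motzkin path. -/
noncomputable def gfun (L : List ℤ) (j : ℕ) : ℤ :=
  if j = 0 ∨ j = L.length ∨ (0 < j ∧ DU L (j - 1)) then 0 else 1

lemma gfun_nonneg (L : List ℤ) (j : ℕ) : 0 ≤ gfun L j := by
  unfold gfun; split <;> norm_num

lemma gfun_le_one (L : List ℤ) (j : ℕ) : gfun L j ≤ 1 := by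
  unfold gfun; split <;> norm_num

lemma gfun_zero (L : List ℤ) : gfun L 0 = 0 := by simp [gfun]

lemma gfun_len (L : List ℤ) : gfun L L.length = 0 := by simp [gfun]

lemma sum_range_gfun (L : List ℤ) (m : ℕ) :
    ((List.range m).map (fun j => gfun L (j + 1) - gfun L j)).sum
      = gfun L m - gfun L 0 := by
  induction m with
  | zero => simp
  | succ m ih =>
    rw [List.range_succ, List.map_append, List.sum_append, ih]
    simp

theorem exists_motzkin_DU_equiv (L : List ℤ) (hL : IsLukas L) :
    ∃ M : List ℤ, IsMotzkin M ∧ M.length = L.length ∧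
      ∀ j : ℕ, (L[j]? = some (-1) ∧ L[j + 1]? = some 1) ↔
        (M[j]? = some (-1) ∧ M[j + 1]? = some 1) := by
  classical
  obtain ⟨-, hpre, hsum⟩ := hL
  set n := L.length with hn
  set f : ℕ → ℤ := fun j => gfun L (j + 1) - gfun L j with hf
  refine ⟨(List.range n).map f, ?_, by simp, ?_⟩
  · -- Motzkin
    have htake : ∀ k, (((List.range n).map f).take k).sum = gfun L (min k n) := by
      intro k
      rw [← List.map_take, List.take_range, sum_range_gfun, gfun_zero, sub_zero]
    refine ⟨⟨?_, ?_, ?_⟩, ?_⟩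
    · intro s hs
      simp only [List.mem_map] at hs
      obtain ⟨j, -, rfl⟩ := hs
      have h1 := gfun_le_one L (j + 1); have h2 := gfun_nonneg L j
      have h3 := gfun_nonneg L (j + 1); have h4 := gfun_le_one L j
      simp only [hf]; omega
    · intro k; rw [htake]; exact gfun_nonneg L _
    · have h := htake n
      rw [min_self, hn, gfun_len] at h
      rwa [List.take_of_length_le (by simp)] at h
    · intro s hs
      simp only [List.mem_map] at hs
      obtain ⟨j, -, rfl⟩ := hs
      have h1 := gfun_le_one L (j + 1); have h2 := gfun_nonneg L j
      have h3 := gfun_nonneg L (j + 1); have h4 := gfun_le_one L j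
      simp only [hf]; omega
  · -- DU positions agree
    have hDU0 : ¬ DU L 0 := by
      rintro ⟨h0, -⟩
      have h1 : 0 < L.length := by
        rcases List.getElem?_eq_some_iff.1 h0 with ⟨h, -⟩; exact h
      have := hpre 1
      rw [List.sum_take_succ L 0 h1] at this
      have hget : L.get ⟨0, h1⟩ = -1 := by
        rcases List.getElem?_eq_some_iff.1 h0 with ⟨h, he⟩; exact he
      simp [List.get_eq_getElem] at hget
      simp [hget] at this
    have hDUlt : ∀ j, DU L j → j + 2 < n := by
      rintro j ⟨-, h1⟩
      rcases List.getElem?_eq_some_iff.1 h1 with ⟨hlt, hval⟩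
      rcases lt_or_eq_of_le (Nat.succ_le_of_lt hlt) with h | h
      · omega
      · exfalso
        have hj1 : j + 1 < L.length := hlt
        have := hpre (j + 1)
        have hts : (L.take (j + 2)).sum = (L.take (j + 1)).sum + L[j+1] :=
          List.sum_take_succ L (j + 1) hj1
        have hfull : L.take (j + 2) = L := List.take_of_length_le (by omega)
        rw [hfull, hsum, hval] at hts
        omega
    have hadj : ∀ j, DU L j → ¬ DU L (j + 1) := by
      rintro j ⟨-, h1⟩ ⟨h2, -⟩
      rw [h1] at h2; exact absurd (Option.some.inj h2) (by norm_num)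
    have hgval : ∀ j, DU L j → gfun L j = 1 ∧ gfun L (j + 1) = 0 ∧ gfun L (j + 2) = 1 := by
      intro j hj
      have h2 := hDUlt j hj
      have h0 : j ≠ 0 := fun h => hDU0 (h ▸ hj)
      refine ⟨?_, ?_, ?_⟩
      · have hc : ¬ (j = 0 ∨ j = L.length ∨ (0 < j ∧ DU L (j - 1))) := by
          rintro (h | h | ⟨hpos, hd⟩)
          · exact h0 h
          · omega
          · have hj' : j - 1 + 1 = j := by omega
            exact hadj (j - 1) hd (by rw [hj']; exact hj)
        unfold gfun; rw [if_neg hc]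
      · unfold gfun
        rw [if_pos (Or.inr (Or.inr ⟨by omega, by simpa using hj⟩))]
      · have hc : ¬ (j + 2 = 0 ∨ j + 2 = L.length ∨ (0 < j + 2 ∧ DU L (j + 2 - 1))) := by
          rintro (h | h | ⟨-, hd⟩)
          · omega
          · omega
          · exact hadj j hj (by simpa using hd)
        unfold gfun; rw [if_neg hc]
    have hget : ∀ j, j < n → ((List.range n).map f)[j]? = some (f j) := by
      intro j hj
      rw [List.getElem?_map, List.getElem?_range hj]; rfl
    intro j
    constructor
    · intro hj
      have hj' : DU L j := hj
      obtain ⟨ha, hb, hc⟩ := hgval j hj'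
      have h2 := hDUlt j hj'
      rw [hget j (by omega), hget (j + 1) (by omega)]
      constructor
      · congr 1; simp only [hf]; rw [ha, hb]; ring
      · congr 1; simp only [hf]; rw [hb, hc]; ring
    · rintro ⟨h1, h2⟩
      have hlen : j + 1 < n := by
        rcases List.getElem?_eq_some_iff.1 h2 with ⟨h, -⟩
        simpa using h
      have hv1 : f j = -1 := by
        rw [hget j (by omega)] at h1
        exact Option.some.inj h1
      have hg1 : gfun L (j + 1) = 0 := by
        have hb := gfun_nonneg L (j + 1)
        have hb' := gfun_le_one L (j + 1)
        have hc := gfun_nonneg L j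
        have hc' := gfun_le_one L j
        simp only [hf] at hv1
        omega
      unfold gfun at hg1
      split at hg1
      · rename_i hcond
        rcases hcond with h | h | ⟨-, hd⟩
        · omega
        · omega
        · exact hd
      · norm_num at hg1
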